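/- Let 𝓛∞ = {[0,a] : 0 ≤ a < 1} be the concept class of closed half-intervals over the universe X = [0,1) ⊂ ℝ. Then PBTD⁺(𝓛∞) = 1, while no concept of 𝓛∞ has a finite teaching set w.r.t. 𝓛∞, i.e., TD(L,𝓛∞) = ∞ for every L ∈ 𝓛∞ (hence TD_min(𝓛∞) = ∞). -/

import Mathlib

namespace PBT

variable {X : Type*}

/-- A set `L ⊆ X` is consistent with a set `T` of labeled examples
(label `true` = “+”, label `false` = “−”). -/
def Consistent (L : Set X) (T : Set (X × Bool)) : Prop :=
  ∀ p ∈ T, (p.2 = true → p.1 ∈ L) ∧ (p.2 = false → p.1 ∉ L)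

/-- `T` is a teaching set for `L` w.r.t. the concept class `𝓛`:
`L` is the only concept in `𝓛` that is consistent with `T`. -/
def IsTeachingSet (𝓛 : Set (Set X)) (L : Set X) (T : Set (X × Bool)) : Prop :=
  Consistent L T ∧ ∀ L' ∈ 𝓛, Consistent L' T → L' = L

/-- `TD L 𝓛`: least size of a finite teaching set for `L` w.r.t. `𝓛` (`⊤` if none exists). -/
noncomputable def TD (L : Set X) (𝓛 : Set (Set X)) : ℕ∞ :=
  sInf {n : ℕ∞ | ∃ T : Finset (X × Bool), IsTeachingSet 𝓛 L ↑T ∧ n = T.card}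

/-- A positive teaching set, identified with its set of (positively labeled) points. -/
def IsPosTeachingSet (𝓛 : Set (Set X)) (L : Set X) (S : Set X) : Prop :=
  S ⊆ L ∧ ∀ L' ∈ 𝓛, S ⊆ L' → L' = L

/-- least size of a finite positive teaching set for `L` w.r.t. `𝓛` (`⊤` if none exists). -/
noncomputable def TDpos (L : Set X) (𝓛 : Set (Set X)) : ℕ∞ :=
  sInf {n : ℕ∞ | ∃ S : Finset X, IsPosTeachingSet 𝓛 L ↑S ∧ n = S.card}

/-- A strict partial order (preference relation) on concepts:
`pr L' L` means `L` is strictly preferred over `L'`. -/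
def StrictPO (pr : Set X → Set X → Prop) : Prop :=
  (∀ A, ¬ pr A A) ∧ ∀ A B C : Set X, pr A B → pr B C → pr A C

/-- `PBTDord 𝓛 pr = sup_{L ∈ 𝓛} TD(L, 𝓛 \ {L' ∈ 𝓛 | pr L' L})`. -/
noncomputable def PBTDord (𝓛 : Set (Set X)) (pr : Set X → Set X → Prop) : ℕ∞ :=
  ⨆ L ∈ 𝓛, TD L {L' ∈ 𝓛 | ¬ pr L' L}

/-- preference-based teaching dimension of `𝓛`. -/
noncomputable def PBTD (𝓛 : Set (Set X)) : ℕ∞ :=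
  sInf {v : ℕ∞ | ∃ pr, StrictPO pr ∧ v = PBTDord 𝓛 pr}

/-- `PBTDposOrd 𝓛 pr = sup_{L ∈ 𝓛} TD⁺(L, 𝓛 \ {L' ∈ 𝓛 | pr L' L})`. -/
noncomputable def PBTDposOrd (𝓛 : Set (Set X)) (pr : Set X → Set X → Prop) : ℕ∞ :=
  ⨆ L ∈ 𝓛, TDpos L {L' ∈ 𝓛 | ¬ pr L' L}

/-- positive preference-based teaching dimension of `𝓛`. -/
noncomputable def PBTDpos (𝓛 : Set (Set X)) : ℕ∞ :=
  sInf {v : ℕ∞ | ∃ pr, StrictPO pr ∧ v = PBTDposOrd 𝓛 pr}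


/-- The class of closed half-intervals `[0,a]`, `0 ≤ a < 1`, over the universe `[0,1)`. -/
def HalfIntervals : Set (Set ↥(Set.Ico (0:ℝ) 1)) :=
  {L | ∃ a : ℝ, 0 ≤ a ∧ a < 1 ∧ L = {x : ↥(Set.Ico (0:ℝ) 1) | (x : ℝ) ≤ a}}

abbrev XI := ↥(Set.Ico (0:ℝ) 1)

lemma HI_eq_iff {a b : ℝ} (ha : a ∈ Set.Ico (0:ℝ) 1) (hb : b ∈ Set.Ico (0:ℝ) 1)
    (h : {x : XI | (x:ℝ) ≤ a} = {x : XI | (x:ℝ) ≤ b}) : a = b := by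
  have h1 : (⟨a, ha⟩ : XI) ∈ {x : XI | (x:ℝ) ≤ a} := le_refl a
  have h2 : (⟨b, hb⟩ : XI) ∈ {x : XI | (x:ℝ) ≤ b} := le_refl b
  rw [h] at h1; rw [← h] at h2
  exact le_antisymm h1 h2

lemma no_teaching (L : Set XI) (hL : L ∈ HalfIntervals) (T : Finset (XI × Bool)) :
    ¬ IsTeachingSet HalfIntervals L ↑T := by
  obtain ⟨a, h0, h1, rfl⟩ := hL
  rintro ⟨hcons, huniq⟩
  set F : Finset ℝ :=
    insert 1 ((T.filter (fun p => a < (p.1:ℝ))).image (fun p => (p.1:ℝ))) with hF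
  have hne : F.Nonempty := ⟨1, Finset.mem_insert_self _ _⟩
  set m := F.min' hne with hm
  have hma : a < m := by
    apply (Finset.lt_min'_iff F hne).mpr
    intro y hy
    rcases Finset.mem_insert.mp hy with rfl | hy
    · exact h1
    · obtain ⟨p, hp, rfl⟩ := Finset.mem_image.mp hy
      exact (Finset.mem_filter.mp hp).2
  have hm1 : m ≤ 1 := Finset.min'_le _ _ (Finset.mem_insert_self _ _)
  set a' := (a + m)/2 with ha'
  have haa' : a < a' := by rw [ha']; linarith
  have ha'm : a' < m := by rw [ha']; linarith
  have ha'1 : a' < 1 := lt_of_lt_of_le ha'm hm1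
  have ha'0 : 0 ≤ a' := le_of_lt (lt_of_le_of_lt h0 haa')
  have hmem : {x : XI | (x:ℝ) ≤ a'} ∈ HalfIntervals := ⟨a', ha'0, ha'1, rfl⟩
  have hcons' : Consistent {x : XI | (x:ℝ) ≤ a'} ↑T := by
    intro p hp
    have hpT : p ∈ T := Finset.mem_coe.mp hp
    constructor
    · intro ht
      have hx : (p.1:ℝ) ≤ a := (hcons p hp).1 ht
      exact le_trans hx (le_of_lt haa')
    · intro hf hmem'
      have hnot : p.1 ∉ {x : XI | (x:ℝ) ≤ a} := (hcons p hp).2 hf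
      have hgt : a < (p.1:ℝ) := lt_of_not_ge hnot
      have hin : (p.1:ℝ) ∈ F :=
        Finset.mem_insert_of_mem
          (Finset.mem_image.mpr ⟨p, Finset.mem_filter.mpr ⟨hpT, hgt⟩, rfl⟩)
      have hmle : m ≤ (p.1:ℝ) := Finset.min'_le F _ hin
      have hle' : (p.1:ℝ) ≤ a' := hmem'
      linarith
  have heq := huniq _ hmem hcons'
  have := HI_eq_iff ⟨ha'0, ha'1⟩ ⟨h0, h1⟩ heq
  linarith

def prSup (A B : Set XI) : Prop := B ⊂ A

lemma prSup_spo : StrictPO prSup :=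
  ⟨fun A h => (lt_irrefl _ h), fun _ _ _ h1 h2 => lt_trans h2 h1⟩

lemma tdpos_le (L : Set XI) (hL : L ∈ HalfIntervals) :
    TDpos L {L' ∈ HalfIntervals | ¬ prSup L' L} ≤ 1 := by
  obtain ⟨a, h0, h1, rfl⟩ := hL
  apply sInf_le
  refine ⟨{⟨a, ⟨h0, h1⟩⟩}, ⟨?_, ?_⟩, by simp⟩
  · intro x hx
    have : x = (⟨a, ⟨h0, h1⟩⟩ : XI) := by simpa using hx
    subst this
    exact le_refl a
  · rintro L' ⟨⟨b, hb0, hb1, rfl⟩, hnp⟩ hsub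
    have hab : a ≤ b := hsub (Finset.mem_coe.mpr (Finset.mem_singleton_self _))
    have hsub2 : {x : XI | (x:ℝ) ≤ a} ⊆ {x : XI | (x:ℝ) ≤ b} :=
      fun x hx => le_trans hx hab
    have heq : {x : XI | (x:ℝ) ≤ a} = {x : XI | (x:ℝ) ≤ b} := by
      by_contra hne
      exact hnp (HasSubset.Subset.ssubset_of_ne hsub2 hne)
    exact heq.symm

lemma pbtdposord_pos (pr : Set XI → Set XI → Prop) (hpr : StrictPO pr) :
    1 ≤ PBTDposOrd HalfIntervals pr := by
  by_contra h
  push_neg at h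
  have h0 : PBTDposOrd HalfIntervals pr = 0 := by
    exact le_antisymm (Order.le_of_lt_succ (by simpa using h)) zero_le
  have key2 : ∀ L ∈ HalfIntervals, ∀ L' ∈ HalfIntervals, ¬ pr L' L → L' = L := by
    intro L hL L' hL' hnp
    have hle : TDpos L {L'' ∈ HalfIntervals | ¬ pr L'' L} ≤ PBTDposOrd HalfIntervals pr :=
      le_iSup₂ (f := fun L (_ : L ∈ HalfIntervals) => TDpos L {L'' ∈ HalfIntervals | ¬ pr L'' L})
        L hL
    have hz : TDpos L {L'' ∈ HalfIntervals | ¬ pr L'' L} = 0 :=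
      le_antisymm (h0 ▸ hle) zero_le
    have hmem : (0:ℕ∞) ∈ {n : ℕ∞ | ∃ S : Finset XI,
        IsPosTeachingSet {L'' ∈ HalfIntervals | ¬ pr L'' L} L ↑S ∧ n = S.card} := by
      by_contra hc
      have hone : (1:ℕ∞) ≤ TDpos L {L'' ∈ HalfIntervals | ¬ pr L'' L} := by
        apply le_sInf
        intro n hn
        exact ENat.one_le_iff_ne_zero.mpr (fun hz0 => hc (hz0 ▸ hn))
      rw [hz] at hone
      exact absurd hone (by norm_num)
    obtain ⟨S, ⟨_, hforce⟩, hcard⟩ := hmem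
    have hS : S = ∅ := Finset.card_eq_zero.mp (by exact_mod_cast hcard.symm)
    exact hforce L' ⟨hL', hnp⟩ (by simp [hS])
  have h1 : ({x : XI | (x:ℝ) ≤ 0}) ∈ HalfIntervals := ⟨0, le_refl _, by norm_num, rfl⟩
  have h2 : ({x : XI | (x:ℝ) ≤ 1/2}) ∈ HalfIntervals := ⟨1/2, by norm_num, by norm_num, rfl⟩
  have hne : ({x : XI | (x:ℝ) ≤ 0}) ≠ ({x : XI | (x:ℝ) ≤ 1/2}) := by
    intro h
    have := HI_eq_iff (by norm_num) (by norm_num) h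
    norm_num at this
  have p21 : pr {x : XI | (x:ℝ) ≤ 1/2} {x : XI | (x:ℝ) ≤ 0} := by
    by_contra hc
    exact hne (key2 _ h1 _ h2 hc).symm
  have p12 : pr {x : XI | (x:ℝ) ≤ 0} {x : XI | (x:ℝ) ≤ 1/2} := by
    by_contra hc
    exact hne (key2 _ h2 _ h1 hc)
  exact hpr.1 _ (hpr.2 _ _ _ p12 p21)

/-- `PBTD⁺(𝓛∞) = 1`, while no concept of `𝓛∞` has a finite teaching set w.r.t. `𝓛∞`. -/
theorem halfintervals_pbtdpos_one_td_infinite :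
    PBTDpos HalfIntervals = 1 ∧ ∀ L ∈ HalfIntervals, TD L HalfIntervals = ⊤ := by
  constructor
  · apply le_antisymm
    · have hord : PBTDposOrd HalfIntervals prSup = 1 :=
        le_antisymm (iSup₂_le fun L hL => tdpos_le L hL) (pbtdposord_pos prSup prSup_spo)
      calc PBTDpos HalfIntervals ≤ PBTDposOrd HalfIntervals prSup :=
            sInf_le ⟨prSup, prSup_spo, rfl⟩
        _ = 1 := hord
    · apply le_sInf
      rintro v ⟨pr, hpr, rfl⟩
      exact pbtdposord_pos pr hpr
  · intro L hL
    have hempty : {n : ℕ∞ | ∃ T : Finset (XI × Bool),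
        IsTeachingSet HalfIntervals L ↑T ∧ n = T.card} = ∅ := by
      ext n
      simp only [Set.mem_setOf_eq, Set.mem_empty_iff_false, iff_false]
      rintro ⟨T, hT, _⟩
      exact no_teaching L hL T hT
    rw [TD, hempty, sInf_empty]

end PBT
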